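/- Let I be a consistently-refined-typed instance of SRTI and let M be a matching in I (with unmatched agents matched to dummies) such that (1) there is no pair of distinct types (i,j) with type i strictly preferring type j to worst_M(i) and type j strictly preferring type i to worst_M(j), and (2) there is no type i with at least two agents such that type i strictly prefers type i to secondworst_M(i). Then there exists a stable matching M' in I such that for every unordered pair of types {i,j}, M and M' contain the same number of pairs consisting of one agent of type i and one of type j. -/

import Mathlib

theorem Equiv.Perm.apply_inv_self {α : Type*} (f : Equiv.Perm α) (x : α) : f (f⁻¹ x) = x :=
  f.apply_symm_apply x

theorem Equiv.Perm.inv_apply_self {α : Type*} (f : Equiv.Perm α) (x : α) : f⁻¹ (f x) = x :=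
  f.symm_apply_apply x


/-- Let `I` be a consistently-refined-typed instance of SRTI
(individual ranks `arank` refine the type-level ranks `trank`, `dthr` is the rank
of the dummy) and let `M` be a matching satisfying the two type-level conditions
(no mutually-preferring pair of distinct types w.r.t. `worst`, no type with at
least two agents preferring itself to its second-worst).  Then there is a stable
matching `M'` containing, for each pair of types `(i,j)`, the same number of pairs
of one agent of type `i` and one of type `j` as `M`. -/
theorem refined_typed_srti_realisation
    {Agent : Type} [Fintype Agent] [DecidableEq Agent]
    (k : ℕ) (typeOf : Agent → ℕ) (htype : ∀ a, typeOf a < k)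
    (trank : ℕ → ℕ → ℕ)
    (arank : Agent → Agent → ℕ) (dthr : Agent → ℕ)
    (hsame : ∀ x y z, typeOf x = typeOf y → z ≠ x → z ≠ y → arank x z = arank y z)
    (hsamed : ∀ x y, typeOf x = typeOf y → dthr x = dthr y)
    (hcross : ∀ x z w, z ≠ x → w ≠ x → typeOf z ≠ typeOf w →
        (arank x z < arank x w ↔ trank (typeOf x) (typeOf z) < trank (typeOf x) (typeOf w)))
    (hdummy : ∀ x z, z ≠ x →
        (arank x z < dthr x ↔ trank (typeOf x) (typeOf z) < trank (typeOf x) k))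
    (M : Agent → Agent) (hinv : ∀ a, M (M a) = a)
    (hacc : ∀ a, M a ≠ a → arank a (M a) < dthr a)
    (worst secondworst : ℕ → ℕ)
    (hworst : ∀ i < k, (∃ a, typeOf a = i) →
        (∃ a, typeOf a = i ∧ (if M a = a then k else typeOf (M a)) = worst i) ∧
        ∀ a, typeOf a = i →
          trank i (if M a = a then k else typeOf (M a)) ≤ trank i (worst i))
    (hsecond : ∀ i < k, (∃ a b : Agent, a ≠ b ∧ typeOf a = i ∧ typeOf b = i) →
        ∃ a, typeOf a = i ∧ (if M a = a then k else typeOf (M a)) = worst i ∧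
          (∃ b, b ≠ a ∧ typeOf b = i ∧
            (if M b = b then k else typeOf (M b)) = secondworst i) ∧
          trank i (secondworst i) ≤ trank i (worst i) ∧
          ∀ c, typeOf c = i → c ≠ a →
            trank i (if M c = c then k else typeOf (M c)) ≤ trank i (secondworst i))
    (h1 : ¬ ∃ i j, i < k ∧ j < k ∧ i ≠ j ∧
        trank i j < trank i (worst i) ∧ trank j i < trank j (worst j))
    (h2 : ¬ ∃ i, i < k ∧ (∃ a b : Agent, a ≠ b ∧ typeOf a = i ∧ typeOf b = i) ∧
        trank i i < trank i (secondworst i)) :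
    ∃ M' : Agent → Agent, (∀ a, M' (M' a) = a) ∧
      (∀ a, M' a ≠ a → arank a (M' a) < dthr a) ∧
      (¬ ∃ a b : Agent, a ≠ b ∧ M' a ≠ b ∧
          (if M' a = a then arank a b < dthr a else arank a b < arank a (M' a)) ∧
          (if M' b = b then arank b a < dthr b else arank b a < arank b (M' b))) ∧
      (∀ i j, (Finset.univ.filter fun a => M a ≠ a ∧ typeOf a = i ∧ typeOf (M a) = j).card
            = (Finset.univ.filter fun a => M' a ≠ a ∧ typeOf a = i ∧ typeOf (M' a) = j).card) := by
  classical
  -- a global bound on individual ranks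
  obtain ⟨Kx, hKx⟩ : ∃ Kx : ℕ, ∀ x z : Agent, arank x z ≤ Kx := by
    refine ⟨Finset.univ.sup fun x : Agent => Finset.univ.sup fun z => arank x z, ?_⟩
    intro x z
    refine le_trans (Finset.le_sup (f := fun z => arank x z) (Finset.mem_univ z)) ?_
    exact Finset.le_sup (f := fun x => Finset.univ.sup fun z => arank x z) (Finset.mem_univ x)
  -- master rank: κ t z = rank of z in the eyes of agents of type t
  obtain ⟨κ, κspec, hκK⟩ : ∃ κ : ℕ → Agent → ℕ,
      (∀ t (z x : Agent), typeOf x = t → x ≠ z → arank x z = κ t z) ∧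
      (∀ t z, κ t z ≤ Kx) := by
    refine ⟨fun t z => if h : ∃ x, typeOf x = t ∧ x ≠ z then arank h.choose z else 0, ?_, ?_⟩
    · intro t z x hx hxz
      have hex : ∃ y, typeOf y = t ∧ y ≠ z := ⟨x, hx, hxz⟩
      have h1' := hex.choose_spec.1
      have h2' := hex.choose_spec.2
      simp only [dif_pos hex]
      exact hsame x hex.choose z (by rw [hx, h1']) hxz.symm (Ne.symm h2')
    · intro t z
      by_cases h : ∃ x, typeOf x = t ∧ x ≠ z
      · simp only [dif_pos h]; exact hKx _ _
      · simp only [dif_neg h]; exact Nat.zero_le _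
  -- weights
  obtain ⟨w, hw1, hwlt⟩ : ∃ w : ℕ → ℕ → ℕ, (∀ i j, 1 ≤ w i j) ∧
      (∀ i j j', i ≤ k → j ≤ k → j' ≤ k → trank i j < trank i j' →
        (Kx + 1) * w i j' ≤ w i j) := by
    have hT : ∀ i j, i ≤ k → j ≤ k →
        trank i j ≤ (Finset.range (k+1) ×ˢ Finset.range (k+1)).sup fun p => trank p.1 p.2 := by
      intro i j hi hj
      have hmem : (i, j) ∈ Finset.range (k+1) ×ˢ Finset.range (k+1) :=
        Finset.mem_product.mpr ⟨Finset.mem_range.mpr (by omega), Finset.mem_range.mpr (by omega)⟩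
      exact Finset.le_sup (f := fun p : ℕ × ℕ => trank p.1 p.2) hmem
    set T : ℕ := (Finset.range (k+1) ×ˢ Finset.range (k+1)).sup fun p => trank p.1 p.2 with hTdef
    refine ⟨fun i j => (Kx + 1) ^ (T - trank i j), fun i j => Nat.one_le_pow _ _ (Nat.succ_pos _), ?_⟩
    intro i j j' hi hj hj' hlt
    have h1' : T - trank i j' + 1 ≤ T - trank i j := by
      have := hT i j' hi hj'
      omega
    calc (Kx+1) * (Kx + 1) ^ (T - trank i j') = (Kx+1) ^ (T - trank i j' + 1) := by
          rw [pow_succ]; ring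
    _ ≤ (Kx+1) ^ (T - trank i j) := Nat.pow_le_pow_right (Nat.succ_pos _) h1'
  -- abstract arithmetic facts
  have arith1 : ∀ R wty ka kq : ℤ, ka + 1 ≤ kq → 1 ≤ wty →
      R + (wty * ka + 0) ≤ R + (0 + wty * kq) - 1 := by
    intro R wty ka kq h1' h2'
    nlinarith [mul_le_mul_of_nonneg_left h1' (le_trans zero_le_one h2')]
  have arith2 : ∀ R wty wp ka kq ka' kq' KK : ℤ,
      ka + 1 ≤ kq → kq' ≤ KK → 0 ≤ ka' → (KK + 1) * wp ≤ wty → 1 ≤ wp → 1 ≤ wty →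
      R + (wty * ka + wp * kq') ≤ R + (wp * ka' + wty * kq) - 1 := by
    intro R wty wp ka kq ka' kq' KK h1' h2' h3' h4' h5' h6'
    nlinarith [mul_le_mul_of_nonneg_left h1' (le_trans zero_le_one h6'),
      mul_le_mul_of_nonneg_left h2' (le_trans zero_le_one h5'), mul_pos (lt_of_lt_of_le zero_lt_one h5') (lt_of_lt_of_le zero_lt_one h6')]
  have arith3 : ∀ R A B Cc D : ℤ, A + 1 ≤ B → Cc + 1 ≤ D →
      R + (Cc*B + (A*D + (B*Cc + D*A))) < R + (Cc*A + (A*Cc + (B*D + D*B))) := by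
    intro R A B Cc D h1' h2'
    have hm := mul_pos (show (0:ℤ) < B - A by linarith) (show (0:ℤ) < D - Cc by linarith)
    nlinarith [hm]
  -- potential
  set n : ℕ := Fintype.card Agent with hndef
  set C : ℤ := n * Kx^2 + 1 with hCdef
  set Ψ : (Agent → Agent) → ℤ := fun N => ∑ x : Agent,
    if N x = x then 0 else ((w (typeOf x) (typeOf (N x)) * κ (typeOf (N x)) x : ℕ) : ℤ) with hΨdef
  set Pf : (Agent → Agent) → ℤ := fun N => ∑ x : Agent,
    if N x = x then 0 else ((κ (typeOf (N x)) x * κ (typeOf x) (N x) : ℕ) : ℤ) with hPfdef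
  set f : (Agent → Agent) → ℤ := fun N => C * Ψ N - Pf N with hfdef
  have hPf0 : ∀ N, 0 ≤ Pf N := by
    intro N
    simp only [hPfdef]
    apply Finset.sum_nonneg
    intro x _
    split
    · exact le_refl 0
    · positivity
  have hPfub : ∀ N, Pf N ≤ (n : ℤ) * Kx^2 := by
    intro N
    have hb : ∀ x ∈ (Finset.univ : Finset Agent),
        (if N x = x then 0 else ((κ (typeOf (N x)) x * κ (typeOf x) (N x) : ℕ) : ℤ))
          ≤ ((Kx:ℤ)^2) := by
      intro x _
      split
      · positivity
      · have h1' := hκK (typeOf (N x)) x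
        have h2' := hκK (typeOf x) (N x)
        have h1z : ((κ (typeOf (N x)) x : ℕ) : ℤ) ≤ (Kx : ℤ) := Int.ofNat_le.mpr h1'
        have h2z : ((κ (typeOf x) (N x) : ℕ) : ℤ) ≤ (Kx : ℤ) := Int.ofNat_le.mpr h2'
        have h10 : (0:ℤ) ≤ ((κ (typeOf (N x)) x : ℕ) : ℤ) := Int.ofNat_nonneg _
        have h20 : (0:ℤ) ≤ ((κ (typeOf x) (N x) : ℕ) : ℤ) := Int.ofNat_nonneg _
        push_cast
        nlinarith [h1z, h2z, h10, h20]
    calc Pf N ≤ ∑ _x : Agent, ((Kx:ℤ)^2) := Finset.sum_le_sum hb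
    _ = (n : ℤ) * Kx^2 := by
        rw [Finset.sum_const, Finset.card_univ, nsmul_eq_mul, hndef]
  -- minimizer
  set S : Finset (Equiv.Perm Agent) :=
    Finset.univ.filter fun σ => ∀ a, typeOf (σ a) = typeOf a with hSdef
  have hSne : S.Nonempty := ⟨1, by simp [hSdef]⟩
  obtain ⟨σ₀, hσ₀S, hσ₀min⟩ :=
    S.exists_min_image (fun σ => f fun x => σ (M (σ⁻¹ x))) hSne
  have hσ₀type : ∀ x, typeOf (σ₀ x) = typeOf x := by
    have := Finset.mem_filter.mp hσ₀S
    exact this.2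
  have hσ₀type' : ∀ x, typeOf (σ₀⁻¹ x) = typeOf x := by
    intro x
    have := hσ₀type (σ₀⁻¹ x)
    rw [Equiv.Perm.apply_inv_self] at this
    exact this.symm
  set M' : Agent → Agent := fun x => σ₀ (M (σ₀⁻¹ x)) with hM'def
  have hM'inv : ∀ x, M' (M' x) = x := by
    intro x
    simp [hM'def, Equiv.Perm.inv_apply_self, hinv, Equiv.Perm.apply_inv_self]
  have hM'fix : ∀ x, M' x = x ↔ M (σ₀⁻¹ x) = σ₀⁻¹ x := by
    intro x
    constructor
    · intro h
      have : σ₀⁻¹ (M' x) = σ₀⁻¹ x := by rw [h]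
      simpa [hM'def, Equiv.Perm.inv_apply_self] using this
    · intro h
      simp only [hM'def, h, Equiv.Perm.apply_inv_self]
  have hM'type : ∀ x, typeOf (M' x) = typeOf (M (σ₀⁻¹ x)) := fun x => hσ₀type _
  -- slot of an agent under M'
  set slot : Agent → ℕ := fun c => if M' c = c then k else typeOf (M' c) with hslotdef
  have hslot_eq : ∀ c, slot c = (if M (σ₀⁻¹ c) = σ₀⁻¹ c then k else typeOf (M (σ₀⁻¹ c))) := by
    intro c
    by_cases h : M' c = c
    · rw [if_pos ((hM'fix c).mp h)]
      simp only [hslotdef]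
      rw [if_pos h]
    · rw [if_neg (fun hh => h ((hM'fix c).mpr hh))]
      simp only [hslotdef]
      rw [if_neg h]
      exact hM'type c
  have hslot_le : ∀ c, trank (typeOf c) (slot c) ≤ trank (typeOf c) (worst (typeOf c)) := by
    intro c
    rw [hslot_eq]
    exact (hworst (typeOf c) (htype c) ⟨c, rfl⟩).2 (σ₀⁻¹ c) (hσ₀type' c)
  have hM'acc : ∀ a, M' a ≠ a → arank a (M' a) < dthr a := by
    intro a ha
    have hya : M (σ₀⁻¹ a) ≠ σ₀⁻¹ a := fun h => ha ((hM'fix a).mpr h)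
    have hd1 := (hdummy (σ₀⁻¹ a) (M (σ₀⁻¹ a)) hya).mp (hacc _ hya)
    rw [hσ₀type'] at hd1
    have hd2 := hdummy a (M' a) ha
    rw [hM'type] at hd2
    exact hd2.mpr hd1
  have hcount : ∀ i j,
      (Finset.univ.filter fun a => M a ≠ a ∧ typeOf a = i ∧ typeOf (M a) = j).card
      = (Finset.univ.filter fun a => M' a ≠ a ∧ typeOf a = i ∧ typeOf (M' a) = j).card := by
    intro i j
    apply Finset.card_bij (fun a _ => σ₀ a)
    · intro a ha
      simp only [Finset.mem_filter, Finset.mem_univ, true_and] at ha ⊢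
      have hMσ : M' (σ₀ a) = σ₀ (M a) := by
        simp [hM'def, Equiv.Perm.inv_apply_self]
      refine ⟨?_, ?_, ?_⟩
      · rw [hMσ]; exact fun h => ha.1 (σ₀.injective h)
      · rw [hσ₀type]; exact ha.2.1
      · rw [hMσ, hσ₀type]; exact ha.2.2
    · intro a _ b _ h
      exact σ₀.injective h
    · intro b hb
      simp only [Finset.mem_filter, Finset.mem_univ, true_and] at hb
      refine ⟨σ₀⁻¹ b, ?_, by simp⟩
      simp only [Finset.mem_filter, Finset.mem_univ, true_and]
      refine ⟨?_, ?_, ?_⟩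
      · exact fun h => hb.1 ((hM'fix b).mpr h)
      · rw [hσ₀type']; exact hb.2.1
      · rw [← hM'type]; exact hb.2.2
  -- exchanging two agents of the same type cannot decrease the potential
  have hstep : ∀ a q : Agent, typeOf a = typeOf q →
      f M' ≤ f (fun x => Equiv.swap a q (M' (Equiv.swap a q x))) := by
    intro a q htq
    have hswt : ∀ x, typeOf (Equiv.swap a q x) = typeOf x := by
      intro x
      by_cases h1' : x = a
      · rw [h1', Equiv.swap_apply_left]; exact htq.symm
      · by_cases h2' : x = q
        · rw [h2', Equiv.swap_apply_right]; exact htq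
        · rw [Equiv.swap_apply_of_ne_of_ne h1' h2']
    have hmem : Equiv.swap a q * σ₀ ∈ S := by
      simp only [hSdef, Finset.mem_filter, Finset.mem_univ, true_and]
      intro x
      rw [Equiv.Perm.mul_apply, hswt, hσ₀type]
    have hle := hσ₀min _ hmem
    have heq : (fun x => (Equiv.swap a q * σ₀) (M ((Equiv.swap a q * σ₀)⁻¹ x)))
        = fun x => Equiv.swap a q (M' (Equiv.swap a q x)) := by
      funext x
      simp [hM'def, Equiv.Perm.mul_apply, mul_inv_rev, Equiv.swap_inv]
    rw [heq] at hle
    exact hle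
  -- classification of a one-sided blocking condition
  have classify : ∀ x y : Agent, x ≠ y →
      (if M' x = x then arank x y < dthr x else arank x y < arank x (M' x)) →
      trank (typeOf x) (typeOf y) < trank (typeOf x) (slot x) ∨
      (M' x ≠ x ∧ typeOf (M' x) = typeOf y ∧ κ (typeOf x) y < κ (typeOf x) (M' x)) := by
    intro x y hxy hc
    by_cases hfix : M' x = x
    · rw [if_pos hfix] at hc
      left
      have hh := (hdummy x y (Ne.symm hxy)).mp hc
      have hsl : slot x = k := by simp only [hslotdef]; rw [if_pos hfix]
      rw [hsl]
      exact hh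
    · rw [if_neg hfix] at hc
      by_cases htyp : typeOf (M' x) = typeOf y
      · right
        refine ⟨hfix, htyp, ?_⟩
        rw [← κspec (typeOf x) y x rfl hxy, ← κspec (typeOf x) (M' x) x rfl (fun h => hfix h.symm)]
        exact hc
      · left
        have hh := (hcross x y (M' x) (Ne.symm hxy) hfix (fun h => htyp h.symm)).mp hc
        have hsl : slot x = typeOf (M' x) := by simp only [hslotdef]; rw [if_neg hfix]
        rw [hsl]
        exact hh
  -- swap case A : x strictly type-prefers y's type to its own slot,
  -- y individually prefers x to its partner (of x's type)
  have swapA : ∀ x y : Agent, x ≠ y → M' x ≠ y →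
      trank (typeOf x) (typeOf y) < trank (typeOf x) (slot x) →
      M' y ≠ y → typeOf (M' y) = typeOf x → κ (typeOf y) x < κ (typeOf y) (M' y) → False := by
    intro x y hxy hMxy hTL hMy htMy hκlt
    set q := M' y with hqdef
    have hMq : M' q = y := by rw [hqdef, hM'inv]
    have hqy : q ≠ y := hMy
    have hqx : q ≠ x := by
      intro h
      apply hMxy
      rw [← hMq, h]
    have hxq : x ≠ q := Ne.symm hqx
    have htqx : typeOf q = typeOf x := htMy
    set τ := Equiv.swap x q with hτdef
    have hτx : τ x = q := Equiv.swap_apply_left x q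
    have hτq : τ q = x := Equiv.swap_apply_right x q
    have hτo : ∀ z, z ≠ x → z ≠ q → τ z = z := fun z h1' h2' =>
      Equiv.swap_apply_of_ne_of_ne h1' h2'
    set N : Agent → Agent := fun z => τ (M' (τ z)) with hNdef
    have hNx : N x = y := by
      show τ (M' (τ x)) = y
      rw [hτx, hMq, hτo y (Ne.symm hxy) (Ne.symm hqy)]
    have hNq : N q = τ (M' x) := by
      show τ (M' (τ q)) = τ (M' x)
      rw [hτq]
    have hgen : ∀ z, z ≠ x → z ≠ q →
        (if N z = z then 0 else ((w (typeOf z) (typeOf (N z)) * κ (typeOf (N z)) z : ℕ) : ℤ))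
        = (if M' z = z then 0 else ((w (typeOf z) (typeOf (M' z)) * κ (typeOf (M' z)) z : ℕ) : ℤ)) := by
      intro z h1' h2'
      have hNz : N z = τ (M' z) := by
        show τ (M' (τ z)) = τ (M' z)
        rw [hτo z h1' h2']
      by_cases hz1 : M' z = x
      · have hNzq : N z = q := by rw [hNz, hz1, hτx]
        rw [hNzq, hz1, if_neg (fun hh => h2' hh.symm), if_neg (fun hh => h1' hh.symm), htqx]
      · by_cases hz2 : M' z = q
        · have hNzx : N z = x := by rw [hNz, hz2, hτq]
          rw [hNzx, hz2, if_neg (fun hh => h1' hh.symm), if_neg (fun hh => h2' hh.symm), htqx]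
        · rw [hNz, hτo (M' z) hz1 hz2]
    have hsplit : ∀ g : Agent → ℤ, ∑ z : Agent, g z
        = ∑ z ∈ Finset.univ \ {x, q}, g z + (g x + g q) := by
      intro g
      rw [← Finset.sum_pair hxq]
      exact (Finset.sum_sdiff (Finset.subset_univ _)).symm
    have hΨdiff : Ψ N ≤ Ψ M' - 1 := by
      have hNterm := hsplit (fun z =>
        if N z = z then 0 else ((w (typeOf z) (typeOf (N z)) * κ (typeOf (N z)) z : ℕ) : ℤ))
      have hMterm := hsplit (fun z =>
        if M' z = z then 0 else ((w (typeOf z) (typeOf (M' z)) * κ (typeOf (M' z)) z : ℕ) : ℤ))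
      have hrest : (∑ z ∈ Finset.univ \ {x, q},
          if N z = z then 0 else ((w (typeOf z) (typeOf (N z)) * κ (typeOf (N z)) z : ℕ) : ℤ))
          = ∑ z ∈ Finset.univ \ {x, q},
            (if M' z = z then 0 else ((w (typeOf z) (typeOf (M' z)) * κ (typeOf (M' z)) z : ℕ) : ℤ)) := by
        apply Finset.sum_congr rfl
        intro z hz
        simp only [Finset.mem_sdiff, Finset.mem_insert, Finset.mem_singleton] at hz
        exact hgen z (fun h => hz.2 (Or.inl h)) (fun h => hz.2 (Or.inr h))
      have hΨN : Ψ N = (∑ z ∈ Finset.univ \ {x, q},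
          if N z = z then 0 else ((w (typeOf z) (typeOf (N z)) * κ (typeOf (N z)) z : ℕ) : ℤ))
          + ((if N x = x then 0 else ((w (typeOf x) (typeOf (N x)) * κ (typeOf (N x)) x : ℕ) : ℤ))
            + (if N q = q then 0 else ((w (typeOf q) (typeOf (N q)) * κ (typeOf (N q)) q : ℕ) : ℤ))) := by
        simp only [hΨdef]
        exact hNterm
      have hΨM : Ψ M' = (∑ z ∈ Finset.univ \ {x, q},
          if M' z = z then 0 else ((w (typeOf z) (typeOf (M' z)) * κ (typeOf (M' z)) z : ℕ) : ℤ))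
          + ((if M' x = x then 0 else ((w (typeOf x) (typeOf (M' x)) * κ (typeOf (M' x)) x : ℕ) : ℤ))
            + (if M' q = q then 0 else ((w (typeOf q) (typeOf (M' q)) * κ (typeOf (M' q)) q : ℕ) : ℤ))) := by
        simp only [hΨdef]
        exact hMterm
      -- reduce to the four explicit terms
      have htermNx : (if N x = x then 0 else ((w (typeOf x) (typeOf (N x)) * κ (typeOf (N x)) x : ℕ) : ℤ))
          = ((w (typeOf x) (typeOf y) : ℕ) : ℤ) * ((κ (typeOf y) x : ℕ) : ℤ) := by
        rw [hNx, if_neg (fun hh => hxy hh.symm)]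
        push_cast
        ring
      have htermMq : (if M' q = q then 0 else ((w (typeOf q) (typeOf (M' q)) * κ (typeOf (M' q)) q : ℕ) : ℤ))
          = ((w (typeOf x) (typeOf y) : ℕ) : ℤ) * ((κ (typeOf y) q : ℕ) : ℤ) := by
        rw [hMq, if_neg (fun hh => hqy hh.symm), htqx]
        push_cast
        ring
      rw [hΨN, hΨM, hrest, htermNx, htermMq]
      have c1 : ((κ (typeOf y) x : ℕ) : ℤ) + 1 ≤ ((κ (typeOf y) q : ℕ) : ℤ) := by
        exact_mod_cast hκlt
      have c6 : (1:ℤ) ≤ ((w (typeOf x) (typeOf y) : ℕ):ℤ) := by exact_mod_cast hw1 _ _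
      by_cases hfx : M' x = x
      · have hNqq : N q = q := by rw [hNq, hfx, hτx]
        rw [if_pos hfx, if_pos hNqq]
        exact arith1 _ _ _ _ c1 c6
      · have hpq : M' x ≠ q := by
          intro h
          apply hxy
          rw [← hMq, ← h, hM'inv]
        have hNqp : N q = M' x := by rw [hNq, hτo (M' x) hfx hpq]
        have hTL' : trank (typeOf x) (typeOf y) < trank (typeOf x) (typeOf (M' x)) := by
          have hsl : slot x = typeOf (M' x) := by simp only [hslotdef]; rw [if_neg hfx]
          rwa [hsl] at hTL
        have htermNq : (if N q = q then 0 else ((w (typeOf q) (typeOf (N q)) * κ (typeOf (N q)) q : ℕ) : ℤ))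
            = ((w (typeOf x) (typeOf (M' x)) : ℕ) : ℤ) * ((κ (typeOf (M' x)) q : ℕ) : ℤ) := by
          rw [hNqp, if_neg hpq, htqx]
          push_cast
          ring
        have htermMx : (if M' x = x then 0 else ((w (typeOf x) (typeOf (M' x)) * κ (typeOf (M' x)) x : ℕ) : ℤ))
            = ((w (typeOf x) (typeOf (M' x)) : ℕ) : ℤ) * ((κ (typeOf (M' x)) x : ℕ) : ℤ) := by
          rw [if_neg hfx]
          push_cast
          ring
        rw [htermNq, htermMx]
        have c2 : ((κ (typeOf (M' x)) q : ℕ) : ℤ) ≤ (Kx : ℤ) := by exact_mod_cast hκK _ _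
        have c3 : (0:ℤ) ≤ ((κ (typeOf (M' x)) x : ℕ) : ℤ) := Int.ofNat_nonneg _
        have c4 : ((Kx:ℤ) + 1) * ((w (typeOf x) (typeOf (M' x)) : ℕ) : ℤ)
            ≤ ((w (typeOf x) (typeOf y) : ℕ):ℤ) := by
          exact_mod_cast hwlt (typeOf x) (typeOf y) (typeOf (M' x))
            (le_of_lt (htype x)) (le_of_lt (htype y)) (le_of_lt (htype (M' x))) hTL'
        have c5 : (1:ℤ) ≤ ((w (typeOf x) (typeOf (M' x)) : ℕ):ℤ) := by exact_mod_cast hw1 _ _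
        exact arith2 _ _ _ _ _ _ _ _ c1 c2 c3 c4 c5 c6
    have hfN : f N < f M' := by
      have h0 := hPf0 N
      have hub := hPfub M'
      have hCpos : (0:ℤ) < C := by rw [hCdef]; positivity
      have hC' : C * Ψ N ≤ C * (Ψ M' - 1) := mul_le_mul_of_nonneg_left hΨdiff (le_of_lt hCpos)
      have hexp : C * (Ψ M' - 1) = C * Ψ M' - C := by ring
      have hCub : Pf M' ≤ C - 1 := by rw [hCdef]; linarith [hub]
      simp only [hfdef]
      linarith [hC', hexp, hCub, h0]
    have hge : f M' ≤ f N := by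
      rw [hNdef, hτdef]
      exact hstep x q htqx.symm
    exact absurd hge (not_le.mpr hfN)
  -- swap case B : both sides individually prefer each other to their partners
  have swapB : ∀ x y : Agent, x ≠ y → M' x ≠ y →
      M' x ≠ x → typeOf (M' x) = typeOf y → κ (typeOf x) y < κ (typeOf x) (M' x) →
      M' y ≠ y → typeOf (M' y) = typeOf x → κ (typeOf y) x < κ (typeOf y) (M' y) → False := by
    intro x y hxy hMxy hMx htp hκ1 hMy htq hκ2
    set p := M' x with hpdef
    set q := M' y with hqdef
    have hMp : M' p = x := by rw [hpdef, hM'inv]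
    have hMq : M' q = y := by rw [hqdef, hM'inv]
    have hpx : p ≠ x := hMx
    have hqy : q ≠ y := hMy
    have hpy : p ≠ y := hMxy
    have hqx : q ≠ x := by
      intro h
      apply hMxy
      rw [hpdef, ← h]
      exact hMq
    have hpq : p ≠ q := by
      intro h
      apply hxy
      rw [← hMp, h]
      exact hMq
    have hxq : x ≠ q := Ne.symm hqx
    have hxp : x ≠ p := Ne.symm hpx
    have hyq : y ≠ q := Ne.symm hqy
    have hyp' : y ≠ p := Ne.symm hpy
    set τ := Equiv.swap x q with hτdef
    have hτx : τ x = q := Equiv.swap_apply_left x q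
    have hτq : τ q = x := Equiv.swap_apply_right x q
    have hτo : ∀ z, z ≠ x → z ≠ q → τ z = z := fun z h1' h2' =>
      Equiv.swap_apply_of_ne_of_ne h1' h2'
    set N : Agent → Agent := fun z => τ (M' (τ z)) with hNdef
    have hNx : N x = y := by
      show τ (M' (τ x)) = y
      rw [hτx, hMq, hτo y (Ne.symm hxy) hyq]
    have hNy : N y = x := by
      show τ (M' (τ y)) = x
      rw [hτo y (Ne.symm hxy) hyq, ← hqdef, hτq]
    have hNp : N p = q := by
      show τ (M' (τ p)) = q
      rw [hτo p hpx hpq, hMp, hτx]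
    have hNq : N q = p := by
      show τ (M' (τ q)) = p
      rw [hτq, ← hpdef, hτo p hpx hpq]
    have hNgen : ∀ z, z ≠ x → z ≠ y → z ≠ p → z ≠ q → N z = M' z := by
      intro z hzx hzy hzp hzq
      have h1' : N z = τ (M' z) := by
        show τ (M' (τ z)) = τ (M' z)
        rw [hτo z hzx hzq]
      have h2' : M' z ≠ x := by
        intro h
        apply hzp
        rw [← hM'inv z, h, ← hpdef]
      have h3' : M' z ≠ q := by
        intro h
        apply hzy
        rw [← hM'inv z, h, hMq]
      rw [h1', hτo (M' z) h2' h3']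
    -- Ψ is unchanged
    have hΨeq : Ψ N = Ψ M' := by
      simp only [hΨdef]
      apply Finset.sum_congr rfl
      intro z _
      by_cases hzx : z = x
      · subst hzx
        rw [hNx, if_neg (fun hh => hxy hh.symm), ← hpdef, if_neg hpx, htp]
      · by_cases hzy : z = y
        · subst hzy
          rw [hNy, if_neg hxy, ← hqdef, if_neg hqy, htq]
        · by_cases hzp : z = p
          · subst hzp
            rw [hNp, if_neg (fun hh => hpq hh.symm), hMp, if_neg (fun hh => hpx hh.symm), htq]
          · by_cases hzq : z = q
            · subst hzq
              rw [hNq, if_neg hpq, hMq, if_neg (fun hh => hqy hh.symm), htp]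
            · rw [hNgen z hzx hzy hzp hzq]
    -- Pf strictly increases
    have hsplit4 : ∀ g : Agent → ℤ, ∑ z : Agent, g z
        = ∑ z ∈ Finset.univ \ ({x, y, p, q} : Finset Agent), g z + (g x + (g y + (g p + g q))) := by
      intro g
      have h4 : ∑ z ∈ ({x, y, p, q} : Finset Agent), g z = g x + (g y + (g p + g q)) := by
        rw [show ({x, y, p, q} : Finset Agent) = insert x (insert y (insert p {q})) from rfl]
        rw [Finset.sum_insert (by simp [hxy, hxp, hxq]),
          Finset.sum_insert (by simp [hyp', hyq]),
          Finset.sum_insert (by simp [hpq]), Finset.sum_singleton]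
      rw [← h4]
      exact (Finset.sum_sdiff (Finset.subset_univ _)).symm
    have hPlt : Pf M' < Pf N := by
      have hPN := hsplit4 (fun z =>
        if N z = z then 0 else ((κ (typeOf (N z)) z * κ (typeOf z) (N z) : ℕ) : ℤ))
      have hPM := hsplit4 (fun z =>
        if M' z = z then 0 else ((κ (typeOf (M' z)) z * κ (typeOf z) (M' z) : ℕ) : ℤ))
      have hrestP : (∑ z ∈ Finset.univ \ ({x, y, p, q} : Finset Agent),
          if N z = z then 0 else ((κ (typeOf (N z)) z * κ (typeOf z) (N z) : ℕ) : ℤ))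
          = ∑ z ∈ Finset.univ \ ({x, y, p, q} : Finset Agent),
            (if M' z = z then 0 else ((κ (typeOf (M' z)) z * κ (typeOf z) (M' z) : ℕ) : ℤ)) := by
        apply Finset.sum_congr rfl
        intro z hz
        simp only [Finset.mem_sdiff, Finset.mem_insert, Finset.mem_singleton] at hz
        rw [hNgen z (fun h => hz.2 (Or.inl h)) (fun h => hz.2 (Or.inr (Or.inl h)))
          (fun h => hz.2 (Or.inr (Or.inr (Or.inl h)))) (fun h => hz.2 (Or.inr (Or.inr (Or.inr h))))]
      have hPfN : Pf N = (∑ z ∈ Finset.univ \ ({x, y, p, q} : Finset Agent),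
          if N z = z then 0 else ((κ (typeOf (N z)) z * κ (typeOf z) (N z) : ℕ) : ℤ))
          + ((if N x = x then 0 else ((κ (typeOf (N x)) x * κ (typeOf x) (N x) : ℕ) : ℤ))
            + ((if N y = y then 0 else ((κ (typeOf (N y)) y * κ (typeOf y) (N y) : ℕ) : ℤ))
              + ((if N p = p then 0 else ((κ (typeOf (N p)) p * κ (typeOf p) (N p) : ℕ) : ℤ))
                + (if N q = q then 0 else ((κ (typeOf (N q)) q * κ (typeOf q) (N q) : ℕ) : ℤ))))) := by
        simp only [hPfdef]
        exact hPN
      have hPfM : Pf M' = (∑ z ∈ Finset.univ \ ({x, y, p, q} : Finset Agent),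
          if M' z = z then 0 else ((κ (typeOf (M' z)) z * κ (typeOf z) (M' z) : ℕ) : ℤ))
          + ((if M' x = x then 0 else ((κ (typeOf (M' x)) x * κ (typeOf x) (M' x) : ℕ) : ℤ))
            + ((if M' y = y then 0 else ((κ (typeOf (M' y)) y * κ (typeOf y) (M' y) : ℕ) : ℤ))
              + ((if M' p = p then 0 else ((κ (typeOf (M' p)) p * κ (typeOf p) (M' p) : ℕ) : ℤ))
                + (if M' q = q then 0 else ((κ (typeOf (M' q)) q * κ (typeOf q) (M' q) : ℕ) : ℤ))))) := by
        simp only [hPfdef]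
        exact hPM
      have tNx : (if N x = x then 0 else ((κ (typeOf (N x)) x * κ (typeOf x) (N x) : ℕ) : ℤ))
          = ((κ (typeOf y) x : ℕ) : ℤ) * ((κ (typeOf x) y : ℕ) : ℤ) := by
        rw [hNx, if_neg (fun hh => hxy hh.symm)]
        push_cast
        ring
      have tNy : (if N y = y then 0 else ((κ (typeOf (N y)) y * κ (typeOf y) (N y) : ℕ) : ℤ))
          = ((κ (typeOf x) y : ℕ) : ℤ) * ((κ (typeOf y) x : ℕ) : ℤ) := by
        rw [hNy, if_neg hxy]
        push_cast
        ring
      have tNp : (if N p = p then 0 else ((κ (typeOf (N p)) p * κ (typeOf p) (N p) : ℕ) : ℤ))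
          = ((κ (typeOf x) p : ℕ) : ℤ) * ((κ (typeOf y) q : ℕ) : ℤ) := by
        rw [hNp, if_neg (fun hh => hpq hh.symm), htq, htp]
        push_cast
        ring
      have tNq : (if N q = q then 0 else ((κ (typeOf (N q)) q * κ (typeOf q) (N q) : ℕ) : ℤ))
          = ((κ (typeOf y) q : ℕ) : ℤ) * ((κ (typeOf x) p : ℕ) : ℤ) := by
        rw [hNq, if_neg hpq, htq, htp]
        push_cast
        ring
      have tMx : (if M' x = x then 0 else ((κ (typeOf (M' x)) x * κ (typeOf x) (M' x) : ℕ) : ℤ))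
          = ((κ (typeOf y) x : ℕ) : ℤ) * ((κ (typeOf x) p : ℕ) : ℤ) := by
        rw [← hpdef, if_neg hpx, htp]
        push_cast
        ring
      have tMy : (if M' y = y then 0 else ((κ (typeOf (M' y)) y * κ (typeOf y) (M' y) : ℕ) : ℤ))
          = ((κ (typeOf x) y : ℕ) : ℤ) * ((κ (typeOf y) q : ℕ) : ℤ) := by
        rw [← hqdef, if_neg hqy, htq]
        push_cast
        ring
      have tMp : (if M' p = p then 0 else ((κ (typeOf (M' p)) p * κ (typeOf p) (M' p) : ℕ) : ℤ))
          = ((κ (typeOf x) p : ℕ) : ℤ) * ((κ (typeOf y) x : ℕ) : ℤ) := by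
        rw [hMp, if_neg (fun hh => hpx hh.symm), htp]
        push_cast
        ring
      have tMq : (if M' q = q then 0 else ((κ (typeOf (M' q)) q * κ (typeOf q) (M' q) : ℕ) : ℤ))
          = ((κ (typeOf y) q : ℕ) : ℤ) * ((κ (typeOf x) y : ℕ) : ℤ) := by
        rw [hMq, if_neg (fun hh => hqy hh.symm), htq]
        push_cast
        ring
      rw [hPfN, hPfM, hrestP, tNx, tNy, tNp, tNq, tMx, tMy, tMp, tMq]
      have c1 : ((κ (typeOf x) y : ℕ) : ℤ) + 1 ≤ ((κ (typeOf x) p : ℕ) : ℤ) := by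
        exact_mod_cast hκ1
      have c2 : ((κ (typeOf y) x : ℕ) : ℤ) + 1 ≤ ((κ (typeOf y) q : ℕ) : ℤ) := by
        exact_mod_cast hκ2
      exact arith3 _ _ _ _ _ c1 c2
    have hfN : f N < f M' := by
      simp only [hfdef]
      rw [hΨeq]
      linarith [hPlt]
    have hge : f M' ≤ f N := by
      rw [hNdef, hτdef]
      exact hstep x q htq.symm
    exact absurd hge (not_le.mpr hfN)
  -- final assembly
  refine ⟨M', hM'inv, hM'acc, ?_, hcount⟩
  rintro ⟨a, b, hab, hM'ab, ca, cb⟩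
  have hM'ba : M' b ≠ a := by
    intro h
    apply hM'ab
    rw [← h, hM'inv]
  have hCA := classify a b hab ca
  have hCB := classify b a (Ne.symm hab) cb
  rcases hCA with hTLa | hIa
  · rcases hCB with hTLb | hIb
    · -- both sides type-level : contradicts h1 / h2
      by_cases hij : typeOf a = typeOf b
      · refine h2 ⟨typeOf a, htype a, ⟨a, b, hab, rfl, hij.symm⟩, ?_⟩
        obtain ⟨a₀, ha₀t, ha₀w, hb₀, hsw, hlast⟩ :=
          hsecond (typeOf a) (htype a) ⟨a, b, hab, rfl, hij.symm⟩
        have hTLa' : trank (typeOf a) (typeOf a) < trank (typeOf a) (slot a) := by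
          rw [← hij] at hTLa
          exact hTLa
        have hTLb' : trank (typeOf a) (typeOf a) < trank (typeOf a) (slot b) := by
          rw [← hij] at hTLb
          exact hTLb
        by_cases hcase : σ₀⁻¹ a = a₀
        · have hne : σ₀⁻¹ b ≠ a₀ := by
            rw [← hcase]
            intro h
            apply hab
            have := congrArg σ₀ h
            rw [Equiv.Perm.apply_inv_self, Equiv.Perm.apply_inv_self] at this
            exact this.symm
          have h3 := hlast (σ₀⁻¹ b) (by rw [hσ₀type']; exact hij.symm) hne
          rw [← hslot_eq b] at h3
          exact lt_of_lt_of_le hTLb' h3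
        · have h3 := hlast (σ₀⁻¹ a) (hσ₀type' a) hcase
          rw [← hslot_eq a] at h3
          exact lt_of_lt_of_le hTLa' h3
      · exact h1 ⟨typeOf a, typeOf b, htype a, htype b, hij,
          lt_of_lt_of_le hTLa (hslot_le a), lt_of_lt_of_le hTLb (hslot_le b)⟩
    · exact swapA a b hab hM'ab hTLa hIb.1 hIb.2.1 hIb.2.2
  · rcases hCB with hTLb | hIb
    · exact swapA b a (Ne.symm hab) hM'ba hTLb hIa.1 hIa.2.1 hIa.2.2
    · exact swapB a b hab hM'ab hIa.1 hIa.2.1 hIa.2.2 hIb.1 hIb.2.1 hIb.2.2
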